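/- The probability of event B4 is at most 2n²·exp(−L·(n−2)/12). -/

import Mathlib

open MeasureTheory

noncomputable section

/-- The uniform probability measure on `[0,1]`. -/
def unif : Measure ℝ := volume.restrict (Set.Icc (0:ℝ) 1)

/-- Joint law of the men's and women's public ratings: `2n` i.i.d. uniforms on `[0,1]`. -/
def ratingsMeasure (n : ℕ) : Measure ((Fin n → ℝ) × (Fin n → ℝ)) :=
  (Measure.pi fun _ => unif).prod (Measure.pi fun _ => unif)

/-- 0-indexed rank: the number of agents with strictly larger rating. -/
def rankOf {n : ℕ} (r : Fin n → ℝ) (a : Fin n) : ℕ :=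
  (Finset.univ.filter fun b => r a < r b).card

/-- Number of agents whose rating lies in the closed interval with endpoints `s` and `t`. -/
def countBetween {n : ℕ} (r : Fin n → ℝ) (s t : ℝ) : ℕ :=
  (Finset.univ.filter fun m => min s t ≤ r m ∧ r m ≤ max s t).card

/-- Event B4: for some pair of ranks `i ≠ j` (with `m = m_i`, `m' = m_j`, `w = w_i`,
`w' = w_j`, `x = r_m − r_{m'}`, `y = r_w − r_{w'}`), either `|x| ≤ 4L` and the number
of men with ratings between `r_m` and `r_{m'}` lies outside
`(2 + |x|(n−2) − L(n−2), 2 + |x|(n−2) + L(n−2))`, or `|y| ≤ 4L` and the analogous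
count for women lies outside `(2 + |y|(n−2) − L(n−2), 2 + |y|(n−2) + L(n−2))`. -/
def EventB4 (n : ℕ) (L : ℝ) (rM rW : Fin n → ℝ) : Prop :=
  ∃ a a' b b' : Fin n, a ≠ a' ∧
    rankOf rM a = rankOf rW b ∧ rankOf rM a' = rankOf rW b' ∧
    ((|rM a - rM a'| ≤ 4*L ∧
      ¬ (2 + |rM a - rM a'| * ((n:ℝ)-2) - L*((n:ℝ)-2) <
           (countBetween rM (rM a) (rM a') : ℝ) ∧
         (countBetween rM (rM a) (rM a') : ℝ) <
           2 + |rM a - rM a'| * ((n:ℝ)-2) + L*((n:ℝ)-2))) ∨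
     (|rW b - rW b'| ≤ 4*L ∧
      ¬ (2 + |rW b - rW b'| * ((n:ℝ)-2) - L*((n:ℝ)-2) <
           (countBetween rW (rW b) (rW b') : ℝ) ∧
         (countBetween rW (rW b) (rW b') : ℝ) <
           2 + |rW b - rW b'| * ((n:ℝ)-2) + L*((n:ℝ)-2))))


open Finset Function
open scoped ENNReal

def piU (n : ℕ) : Measure (Fin n → ℝ) := Measure.pi fun _ => unif

instance : IsProbabilityMeasure unif := ⟨by simp [unif, Real.volume_Icc]⟩

lemma unif_singleton (x : ℝ) : unif {x} = 0 := by
  rw [unif, Measure.restrict_apply (measurableSet_singleton x)]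
  exact measure_mono_null Set.inter_subset_left (Real.volume_singleton)

def chi (t u v w : ℝ) : ℝ≥0∞ :=
  if min u v ≤ w ∧ w ≤ max u v then ENNReal.ofReal (Real.exp t) else 1

lemma chi_measurable (t u v : ℝ) : Measurable (chi t u v) := by
  unfold chi
  refine Measurable.ite ?_ measurable_const measurable_const
  exact measurableSet_Icc (a := min u v) (b := max u v)

lemma chi_comp_measurable {n : ℕ} (t : ℝ) (a a' i : Fin n) :
    Measurable fun r : Fin n → ℝ => chi t (r a) (r a') (r i) := by
  unfold chi
  refine Measurable.ite ?_ measurable_const measurable_const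
  rw [Set.setOf_and]
  exact (measurableSet_le ((measurable_pi_apply a).min (measurable_pi_apply a'))
      (measurable_pi_apply i)).inter
    (measurableSet_le (measurable_pi_apply i)
      ((measurable_pi_apply a).max (measurable_pi_apply a')))

lemma chi_lintegral {t c : ℝ} (hc : Real.exp t - 1 ≤ c) {u v : ℝ}
    (hu : u ∈ Set.Icc (0:ℝ) 1) (hv : v ∈ Set.Icc (0:ℝ) 1) :
    ∫⁻ w, chi t u v w ∂unif ≤ ENNReal.ofReal (Real.exp (c * |u - v|)) := by
  set B := Set.Icc (min u v) (max u v) with hBdef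
  set ℓ := |u - v| with hℓdef
  have hℓ0 : 0 ≤ ℓ := abs_nonneg _
  have hℓ1 : ℓ ≤ 1 := by
    rw [hℓdef, abs_sub_le_iff]
    constructor <;> nlinarith [hu.1, hu.2, hv.1, hv.2]
  have hIcc : B ⊆ Set.Icc (0:ℝ) 1 := Set.Icc_subset_Icc (le_min hu.1 hv.1) (max_le hu.2 hv.2)
  have hB : unif B = ENNReal.ofReal ℓ := by
    rw [unif, Measure.restrict_apply measurableSet_Icc,
      Set.inter_eq_self_of_subset_left hIcc, hBdef, Real.volume_Icc, max_sub_min_eq_abs, abs_sub_comm v u]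
  have hBc : unif Bᶜ = ENNReal.ofReal (1 - ℓ) := by
    rw [measure_compl measurableSet_Icc (measure_ne_top _ _), hB, measure_univ,
      ENNReal.ofReal_sub _ hℓ0, ENNReal.ofReal_one]
  have hpt : ∀ w, chi t u v w
      = B.indicator (fun _ => ENNReal.ofReal (Real.exp t)) w + Bᶜ.indicator (fun _ => 1) w := by
    intro w
    by_cases hw : w ∈ B
    · have hmem : min u v ≤ w ∧ w ≤ max u v := hw
      simp only [chi]
      rw [if_pos hmem, Set.indicator_of_mem hw,
        Set.indicator_of_notMem (fun h : w ∈ Bᶜ => h hw), add_zero]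
    · have hmem : ¬ (min u v ≤ w ∧ w ≤ max u v) := hw
      simp only [chi]
      rw [if_neg hmem, Set.indicator_of_notMem hw, Set.indicator_of_mem (Set.mem_compl hw),
        zero_add]
  calc ∫⁻ w, chi t u v w ∂unif
      = ENNReal.ofReal (Real.exp t) * unif B + unif Bᶜ := by
        simp_rw [hpt]
        rw [lintegral_add_left (measurable_const.indicator measurableSet_Icc)]
        rw [lintegral_indicator_const measurableSet_Icc,
          lintegral_indicator_const measurableSet_Icc.compl, one_mul]
    _ = ENNReal.ofReal (Real.exp t * ℓ + (1 - ℓ)) := by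
        rw [hB, hBc, ← ENNReal.ofReal_mul (Real.exp_nonneg t), ENNReal.ofReal_add (by positivity) (by linarith)]
    _ ≤ ENNReal.ofReal (Real.exp (c * ℓ)) := by
        apply ENNReal.ofReal_le_ofReal
        nlinarith [Real.add_one_le_exp (c * ℓ), hℓ0, hc]

lemma prod_chi_measurable {n : ℕ} (t : ℝ) (a a' : Fin n) (u : Finset (Fin n)) :
    Measurable fun r : Fin n → ℝ => ∏ i ∈ u, chi t (r a) (r a') (r i) :=
  Finset.measurable_prod _ fun i _ => chi_comp_measurable t a a' i

lemma updateFinset_apply_not_mem {n : ℕ} {u : Finset (Fin n)} {j : Fin n} (hj : j ∉ u)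
    (x : Fin n → ℝ) (y : ∀ i : u, ℝ) : updateFinset x u y j = x j := by
  simp [updateFinset, hj]

lemma lmarginal_pullout {n : ℕ} (u : Finset (Fin n)) (g f : (Fin n → ℝ) → ℝ≥0∞)
    (hg : ∀ x y, g (updateFinset x u y) = g x) (hf : Measurable f) (x : Fin n → ℝ) :
    (∫⋯∫⁻_u, (fun r => g r * f r) ∂fun _ => unif) x
      = g x * (∫⋯∫⁻_u, f ∂fun _ => unif) x := by
  simp only [lmarginal]
  simp_rw [hg]
  exact lintegral_const_mul _ (hf.comp measurable_updateFinset)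

lemma marg_prod {n : ℕ} (a a' : Fin n) (t : ℝ) (u : Finset (Fin n)) :
    a ∉ u → a' ∉ u → ∀ x,
    (∫⋯∫⁻_u, (fun r => ∏ i ∈ u, chi t (r a) (r a') (r i)) ∂fun _ => unif) x
      = (∫⁻ w, chi t (x a) (x a') w ∂unif) ^ u.card := by
  induction u using Finset.induction_on with
  | empty => intro _ _ x; simp
  | @insert j u hj ih =>
    intro ha ha' x
    have hau : a ∉ u := fun h => ha (mem_insert_of_mem h)
    have ha'u : a' ∉ u := fun h => ha' (mem_insert_of_mem h)
    have haj : a ≠ j := fun h => ha (h ▸ mem_insert_self j u)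
    have ha'j : a' ≠ j := fun h => ha' (h ▸ mem_insert_self j u)
    have hfm : Measurable fun r : Fin n → ℝ =>
        chi t (r a) (r a') (r j) * ∏ i ∈ u, chi t (r a) (r a') (r i) :=
      (chi_comp_measurable t a a' j).mul (prod_chi_measurable t a a' u)
    have hprod : (fun r : Fin n → ℝ => ∏ i ∈ insert j u, chi t (r a) (r a') (r i))
        = fun r => chi t (r a) (r a') (r j) * ∏ i ∈ u, chi t (r a) (r a') (r i) := by
      funext r; rw [Finset.prod_insert hj]
    rw [hprod, lmarginal_insert _ hfm hj]
    have hinner : ∀ w : ℝ,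
        (∫⋯∫⁻_u, (fun r => chi t (r a) (r a') (r j) * ∏ i ∈ u, chi t (r a) (r a') (r i))
          ∂fun _ => unif) (Function.update x j w)
        = chi t (x a) (x a') w * (∫⁻ w', chi t (x a) (x a') w' ∂unif) ^ u.card := by
      intro w
      rw [lmarginal_pullout u (fun r => chi t (r a) (r a') (r j)) _
        (fun z y => by
          simp only [updateFinset_apply_not_mem hau, updateFinset_apply_not_mem ha'u,
            updateFinset_apply_not_mem hj]) (prod_chi_measurable t a a' u)]
      rw [ih hau ha'u]
      rw [Function.update_self, Function.update_of_ne haj, Function.update_of_ne ha'j]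
    simp_rw [hinner]
    rw [lintegral_mul_const _ (chi_measurable t (x a) (x a')),
      Finset.card_insert_of_notMem hj, pow_succ, mul_comm]

def unitBox (n : ℕ) : Set (Fin n → ℝ) := {r | ∀ i, r i ∈ Set.Icc (0:ℝ) 1}

lemma unitBox_measurable (n : ℕ) : MeasurableSet (unitBox n) := by
  have : unitBox n = ⋂ i, (fun r : Fin n → ℝ => r i) ⁻¹' Set.Icc (0:ℝ) 1 := by
    ext r; simp [unitBox]
  rw [this]
  exact MeasurableSet.iInter fun i => (measurable_pi_apply i) measurableSet_Icc

def sAA {n : ℕ} (a a' : Fin n) : Finset (Fin n) := (Finset.univ.erase a).erase a'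

lemma a_not_mem_sAA {n : ℕ} (a a' : Fin n) : a ∉ sAA a a' := by
  simp [sAA]

lemma a'_not_mem_sAA {n : ℕ} (a a' : Fin n) : a' ∉ sAA a a' := Finset.notMem_erase _ _

lemma insert_sAA {n : ℕ} (a a' : Fin n) (h : a ≠ a') :
    insert a (insert a' (sAA a a')) = Finset.univ := by
  rw [sAA, Finset.insert_erase (Finset.mem_erase.2 ⟨h.symm, Finset.mem_univ _⟩),
    Finset.insert_erase (Finset.mem_univ _)]

lemma pair_union_sAA {n : ℕ} (a a' : Fin n) (h : a ≠ a') :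
    ({a, a'} : Finset (Fin n)) ∪ sAA a a' = Finset.univ := by
  rw [← insert_sAA a a' h]
  ext i
  simp only [Finset.mem_union, Finset.mem_insert, Finset.mem_singleton]
  tauto

lemma disjoint_pair_sAA {n : ℕ} (a a' : Fin n) :
    Disjoint ({a, a'} : Finset (Fin n)) (sAA a a') := by
  rw [Finset.disjoint_left]
  intro i hi
  rcases Finset.mem_insert.1 hi with rfl | hi
  · exact a_not_mem_sAA _ _
  · rw [Finset.mem_singleton.1 hi]
    exact a'_not_mem_sAA _ _

lemma card_sAA {n : ℕ} (a a' : Fin n) (h : a ≠ a') : (sAA a a').card = n - 2 := by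
  rw [sAA, Finset.card_erase_of_mem (Finset.mem_erase.2 ⟨h.symm, Finset.mem_univ _⟩),
    Finset.card_erase_of_mem (Finset.mem_univ _), Finset.card_univ, Fintype.card_fin]
  omega

def kcount {n : ℕ} (a a' : Fin n) (r : Fin n → ℝ) : ℕ :=
  ((sAA a a').filter fun i => min (r a) (r a') ≤ r i ∧ r i ≤ max (r a) (r a')).card

def Aset (n : ℕ) (L t e : ℝ) (a a' : Fin n) : Set (Fin n → ℝ) :=
  {r | r ∈ unitBox n ∧ |r a - r a'| ≤ 4*L ∧
    t * ((|r a - r a'| + e) * ((n:ℝ) - 2)) ≤ t * (kcount a a' r : ℝ)}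

lemma kcount_measurable {n : ℕ} (a a' : Fin n) :
    Measurable fun r : Fin n → ℝ => (kcount a a' r : ℝ) := by
  have hrw : (fun r : Fin n → ℝ => (kcount a a' r : ℝ))
      = fun r => ∑ i ∈ sAA a a',
          if min (r a) (r a') ≤ r i ∧ r i ≤ max (r a) (r a') then (1:ℝ) else 0 := by
    funext r
    rw [kcount, Finset.card_filter]
    push_cast
    exact Finset.sum_congr rfl fun i _ => by split <;> norm_num
  rw [hrw]
  refine Finset.measurable_sum _ fun i _ => Measurable.ite ?_ measurable_const measurable_const
  rw [Set.setOf_and]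
  exact (measurableSet_le ((measurable_pi_apply a).min (measurable_pi_apply a'))
      (measurable_pi_apply i)).inter
    (measurableSet_le (measurable_pi_apply i)
      ((measurable_pi_apply a).max (measurable_pi_apply a')))

lemma Aset_measurable (n : ℕ) (L t e : ℝ) (a a' : Fin n) :
    MeasurableSet (Aset n L t e a a') := by
  refine MeasurableSet.inter (unitBox_measurable n) (MeasurableSet.inter ?_ ?_)
  · exact measurableSet_le (((measurable_pi_apply a).sub (measurable_pi_apply a')).abs)
      measurable_const
  · exact measurableSet_le
      (measurable_const.mul ((((measurable_pi_apply a).sub (measurable_pi_apply a')).abs.add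
        measurable_const).mul measurable_const))
      (measurable_const.mul (kcount_measurable a a'))

lemma core {n : ℕ} {L : ℝ} (hL : 0 < L) (t c e : ℝ) (hc : Real.exp t - 1 ≤ c)
    (hfinal : ∀ ℓ : ℝ, 0 ≤ ℓ → ℓ ≤ 4*L → c * ℓ - t * (ℓ + e) ≤ -(L/12))
    (a a' : Fin n) (haa : a ≠ a') :
    piU n (Aset n L t e a a') ≤ ENNReal.ofReal (Real.exp (-(L/12) * ((n:ℝ) - 2))) := by
  have hn : 2 ≤ n := by
    by_contra h
    push_neg at h
    have h1 := a.isLt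
    have h2 := a'.isLt
    exact haa (Fin.ext (by omega))
  have hmcast : ((sAA a a').card : ℝ) = (n:ℝ) - 2 := by
    rw [card_sAA a a' haa]
    push_cast [Nat.cast_sub hn]
    ring
  have hm0 : (0:ℝ) ≤ (n:ℝ) - 2 := by
    have : (2:ℝ) ≤ (n:ℝ) := by exact_mod_cast hn
    linarith
  set G : (Fin n → ℝ) → ℝ≥0∞ := fun r =>
    if r a ∈ Set.Icc (0:ℝ) 1 ∧ r a' ∈ Set.Icc (0:ℝ) 1 ∧ |r a - r a'| ≤ 4*L then
      ENNReal.ofReal (Real.exp (-(t * ((|r a - r a'| + e) * ((n:ℝ) - 2))))) else 0 with hGdef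
  set F : (Fin n → ℝ) → ℝ≥0∞ := fun r => G r * ∏ i ∈ sAA a a', chi t (r a) (r a') (r i)
    with hFdef
  have hGmeas : Measurable G := by
    refine Measurable.ite ?_ ?_ measurable_const
    · rw [Set.setOf_and, Set.setOf_and]
      refine MeasurableSet.inter ((measurable_pi_apply a) measurableSet_Icc)
        (MeasurableSet.inter ((measurable_pi_apply a') measurableSet_Icc) ?_)
      exact measurableSet_le (((measurable_pi_apply a).sub (measurable_pi_apply a')).abs)
        measurable_const
    · apply ENNReal.measurable_ofReal.comp
      apply Real.measurable_exp.comp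
      apply Measurable.neg
      exact measurable_const.mul ((((measurable_pi_apply a).sub
        (measurable_pi_apply a')).abs.add measurable_const).mul measurable_const)
  have hFmeas : Measurable F := hGmeas.mul (prod_chi_measurable t a a' _)
  -- Step 1 : pointwise bound
  have hpoint : ∀ r ∈ Aset n L t e a a', (1:ℝ≥0∞) ≤ F r := by
    rintro r ⟨hbox, h4, hineq⟩
    have hGr : G r = ENNReal.ofReal (Real.exp (-(t * ((|r a - r a'| + e) * ((n:ℝ) - 2))))) :=
      if_pos ⟨hbox a, hbox a', h4⟩
    have hprodr : (∏ i ∈ sAA a a', chi t (r a) (r a') (r i))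
        = ENNReal.ofReal (Real.exp (t * (kcount a a' r : ℝ))) := by
      unfold chi
      rw [Finset.prod_ite _ _]
      rw [Finset.prod_const, Finset.prod_const_one, mul_one]
      rw [← ENNReal.ofReal_pow (Real.exp_nonneg t), ← Real.exp_nat_mul]
      rw [kcount]
      ring_nf
    rw [hFdef]
    simp only
    rw [hGr, hprodr, ← ENNReal.ofReal_mul (Real.exp_nonneg _), ← Real.exp_add]
    rw [ENNReal.one_le_ofReal]
    apply Real.one_le_exp
    linarith
  have hstep1 : piU n (Aset n L t e a a') ≤ ∫⁻ r, F r ∂piU n := by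
    rw [← lintegral_indicator_one (Aset_measurable n L t e a a')]
    apply lintegral_mono
    intro r
    by_cases hr : r ∈ Aset n L t e a a'
    · rw [Set.indicator_of_mem hr]
      exact hpoint r hr
    · rw [Set.indicator_of_notMem hr]
      exact zero_le
  refine hstep1.trans ?_
  -- Step 2: marginalize
  have hx0 : ∫⁻ r, F r ∂piU n = (∫⋯∫⁻_Finset.univ, F ∂fun _ => unif) (fun _ => 0) :=
    lintegral_eq_lmarginal_univ (fun _ => 0)
  rw [hx0, ← pair_union_sAA a a' haa, lmarginal_union _ F hFmeas (disjoint_pair_sAA a a')]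
  have hinner : ∀ x, (∫⋯∫⁻_sAA a a', F ∂fun _ => unif) x
      ≤ ENNReal.ofReal (Real.exp (-(L/12) * ((n:ℝ) - 2))) := by
    intro x
    have hpull : (∫⋯∫⁻_sAA a a', F ∂fun _ => unif) x
        = G x * (∫⁻ w, chi t (x a) (x a') w ∂unif) ^ (sAA a a').card := by
      rw [hFdef]
      rw [lmarginal_pullout _ G _ ?hg (prod_chi_measurable t a a' _) x]
      · rw [marg_prod a a' t _ (a_not_mem_sAA a a') (a'_not_mem_sAA a a') x]
      case hg =>
        intro z y
        rw [hGdef]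
        simp only [updateFinset_apply_not_mem (a_not_mem_sAA a a'),
          updateFinset_apply_not_mem (a'_not_mem_sAA a a')]
    rw [hpull]
    by_cases hcond : x a ∈ Set.Icc (0:ℝ) 1 ∧ x a' ∈ Set.Icc (0:ℝ) 1 ∧ |x a - x a'| ≤ 4*L
    · obtain ⟨hu, hv, h4⟩ := hcond
      have hGx : G x = ENNReal.ofReal (Real.exp (-(t * ((|x a - x a'| + e) * ((n:ℝ) - 2))))) :=
        if_pos ⟨hu, hv, h4⟩
      set ℓ := |x a - x a'| with hℓ
      have hℓ0 : 0 ≤ ℓ := abs_nonneg _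
      have hI := chi_lintegral hc hu hv
      calc G x * (∫⁻ w, chi t (x a) (x a') w ∂unif) ^ (sAA a a').card
          ≤ ENNReal.ofReal (Real.exp (-(t * ((ℓ + e) * ((n:ℝ) - 2)))))
            * (ENNReal.ofReal (Real.exp (c * ℓ))) ^ (sAA a a').card := by
            rw [hGx]
            exact mul_le_mul_right (pow_le_pow_left' hI _) _
        _ = ENNReal.ofReal (Real.exp (-(t * ((ℓ + e) * ((n:ℝ) - 2))) + c * ℓ * ((n:ℝ) - 2))) := by
            rw [← ENNReal.ofReal_pow (Real.exp_nonneg _), ← Real.exp_nat_mul,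
              ← ENNReal.ofReal_mul (Real.exp_nonneg _), ← Real.exp_add, hmcast]
            ring_nf
        _ ≤ ENNReal.ofReal (Real.exp (-(L/12) * ((n:ℝ) - 2))) := by
            apply ENNReal.ofReal_le_ofReal
            apply Real.exp_le_exp.2
            have hfin := hfinal ℓ hℓ0 h4
            nlinarith [mul_le_mul_of_nonneg_right hfin hm0]
    · have hGx : G x = 0 := if_neg hcond
      rw [hGx, zero_mul]
      exact zero_le
  calc (∫⋯∫⁻_{a, a'}, (∫⋯∫⁻_sAA a a', F ∂fun _ => unif) ∂fun _ => unif) (fun _ => 0)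
      ≤ (∫⋯∫⁻_{a, a'}, (fun _ => ENNReal.ofReal (Real.exp (-(L/12) * ((n:ℝ) - 2))))
          ∂fun _ => unif) (fun _ => 0) := lmarginal_mono (fun x => hinner x) _
    _ = ENNReal.ofReal (Real.exp (-(L/12) * ((n:ℝ) - 2))) := by
        simp [lmarginal, lintegral_const]


lemma exp_fifth : Real.exp (1/5) ≤ 43/35 := by
  have h5 : Real.exp (1/5) ^ (5:ℕ) = Real.exp 1 := by
    rw [← Real.exp_nat_mul]; norm_num
  by_contra h
  push_neg at h
  have hpow : (43/35 : ℝ)^(5:ℕ) < Real.exp (1/5) ^ (5:ℕ) :=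
    pow_lt_pow_left₀ h (by norm_num) (by norm_num)
  rw [h5] at hpow
  have := Real.exp_one_lt_d9
  norm_num at hpow
  linarith

lemma exp_neg_quarter : Real.exp (-(1/4)) ≤ 15/19 := by
  have h4 : Real.exp (1/4) ^ (4:ℕ) = Real.exp 1 := by
    rw [← Real.exp_nat_mul]; norm_num
  have hq : (19/15 : ℝ) ≤ Real.exp (1/4) := by
    by_contra h
    push_neg at h
    have hpow : Real.exp (1/4) ^ (4:ℕ) < (19/15 : ℝ)^(4:ℕ) :=
      pow_lt_pow_left₀ h (Real.exp_pos _).le (by norm_num)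
    rw [h4] at hpow
    have := Real.exp_one_gt_d9
    norm_num at hpow
    linarith
  rw [Real.exp_neg]
  calc (Real.exp (1/4))⁻¹ ≤ ((19:ℝ)/15)⁻¹ := by
        apply inv_anti₀ (by norm_num) hq
    _ = 15/19 := by norm_num
-- rank lemmas
lemma rankOf_lt_of_lt {n : ℕ} (r : Fin n → ℝ) {a b : Fin n} (h : r a < r b) :
    rankOf r b < rankOf r a := by
  apply Finset.card_lt_card
  rw [Finset.ssubset_iff_of_subset
      (Finset.monotone_filter_right _ (fun x _ (hx : r b < r x) => lt_trans h hx))]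
  exact ⟨b, Finset.mem_filter.2 ⟨Finset.mem_univ _, h⟩,
    fun hmem => absurd (Finset.mem_filter.1 hmem).2 (lt_irrefl _)⟩

lemma eq_of_rankOf_eq {n : ℕ} (r : Fin n → ℝ) {a b : Fin n}
    (h : rankOf r a = rankOf r b) : r a = r b := by
  by_contra hv
  rcases lt_or_gt_of_ne hv with hlt | hlt
  · exact absurd h (rankOf_lt_of_lt r hlt).ne'
  · exact absurd h (rankOf_lt_of_lt r hlt).ne

-- null sets
lemma unitBox_compl_null (n : ℕ) : piU n (unitBox n)ᶜ = 0 := by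
  have hsub : (unitBox n)ᶜ ⊆ ⋃ i, Function.eval i ⁻¹' (Set.Icc (0:ℝ) 1)ᶜ := by
    intro r hr
    simp only [unitBox, Set.mem_compl_iff, Set.mem_setOf_eq, not_forall] at hr
    obtain ⟨i, hi⟩ := hr
    exact Set.mem_iUnion.2 ⟨i, hi⟩
  refine measure_mono_null hsub (measure_iUnion_null fun i => ?_)
  apply Measure.pi_eval_preimage_null
  rw [unif, Measure.restrict_apply measurableSet_Icc.compl, Set.compl_inter_self]
  simp

lemma diag_null {n : ℕ} (i j : Fin n) (hij : i ≠ j) : piU n {r | r i = r j} = 0 := by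
  classical
  have hmeas : MeasurableSet {r : Fin n → ℝ | r i = r j} :=
    measurableSet_eq_fun (measurable_pi_apply i) (measurable_pi_apply j)
  set f : (Fin n → ℝ) → ℝ≥0∞ := fun r => Set.indicator {r : Fin n → ℝ | r i = r j} 1 r with hf
  have hfm : Measurable f := measurable_const.indicator hmeas
  have h1 : piU n {r | r i = r j} = ∫⁻ r, f r ∂piU n := (lintegral_indicator_one hmeas).symm
  rw [h1, piU, lintegral_eq_lmarginal_univ (fun _ => (0:ℝ))]
  have huniv : (Finset.univ.erase i) ∪ {i} = Finset.univ := by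
    ext b
    simp only [Finset.mem_union, Finset.mem_erase, Finset.mem_singleton, Finset.mem_univ,
      iff_true, and_true]
    tauto
  have hdisj : Disjoint (Finset.univ.erase i) ({i} : Finset (Fin n)) := by
    simp [Finset.disjoint_singleton_right]
  rw [← huniv, lmarginal_union _ f hfm hdisj]
  have hzero : (∫⋯∫⁻_{i}, f ∂fun _ => unif) = fun _ => 0 := by
    funext x
    rw [lmarginal_singleton]
    have hpt : ∀ w, f (Function.update x i w) = Set.indicator {x j} (fun _ => (1:ℝ≥0∞)) w := by
      intro w
      rw [hf]
      simp only [Set.indicator, Set.mem_setOf_eq, Function.update_self,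
        Function.update_of_ne hij.symm, Set.mem_singleton_iff, Pi.one_apply]
    simp_rw [hpt]
    rw [lintegral_indicator_const (measurableSet_singleton _), one_mul]
    exact unif_singleton _
  rw [hzero]
  simp [lmarginal]

lemma noninj_null (n : ℕ) : piU n {r | ¬ Function.Injective r} = 0 := by
  have hsub : {r : Fin n → ℝ | ¬ Function.Injective r}
      ⊆ ⋃ i, ⋃ j, ⋃ (_ : i ≠ j), {r : Fin n → ℝ | r i = r j} := by
    intro r hr
    simp only [Set.mem_setOf_eq, Function.Injective, not_forall] at hr
    obtain ⟨i, j, hij, hne⟩ := hr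
    exact Set.mem_iUnion.2 ⟨i, Set.mem_iUnion.2 ⟨j, Set.mem_iUnion.2 ⟨hne, hij⟩⟩⟩
  refine measure_mono_null hsub ?_
  refine measure_iUnion_null fun i => measure_iUnion_null fun j => measure_iUnion_null fun hij =>
    diag_null i j hij

lemma countBetween_comm {n : ℕ} (r : Fin n → ℝ) (s t : ℝ) :
    countBetween r s t = countBetween r t s := by
  unfold countBetween
  rw [min_comm, max_comm]

lemma countBetween_eq_kcount {n : ℕ} (r : Fin n → ℝ) (a a' : Fin n) (h : a ≠ a') :
    countBetween r (r a) (r a') = kcount a a' r + 2 := by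
  unfold countBetween kcount
  rw [← insert_sAA a a' h]
  rw [Finset.filter_insert, Finset.filter_insert]
  rw [if_pos ⟨min_le_left _ _, le_max_left _ _⟩, if_pos ⟨min_le_right _ _, le_max_right _ _⟩]
  rw [Finset.card_insert_of_notMem, Finset.card_insert_of_notMem]
  · intro hmem
    rcases Finset.mem_filter.1 hmem with ⟨hmem', -⟩
    exact a'_not_mem_sAA a a' hmem'
  · intro hmem
    rcases Finset.mem_insert.1 hmem with heq | hmem'
    · exact h heq
    · exact a_not_mem_sAA a a' (Finset.mem_filter.1 hmem').1

lemma event_pair_sub {n : ℕ} {L : ℝ} (r : Fin n → ℝ) (a a' : Fin n) (haa : a ≠ a')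
    (hbox : r ∈ unitBox n) (h4 : |r a - r a'| ≤ 4*L)
    (hbad : ¬ (2 + |r a - r a'| * ((n:ℝ)-2) - L*((n:ℝ)-2) < (countBetween r (r a) (r a') : ℝ) ∧
      (countBetween r (r a) (r a') : ℝ) < 2 + |r a - r a'| * ((n:ℝ)-2) + L*((n:ℝ)-2))) :
    r ∈ Aset n L (1/5) L a a' ∪ Aset n L (-(1/4)) (-L) a a' := by
  have hcb : (countBetween r (r a) (r a') : ℝ) = (kcount a a' r : ℝ) + 2 := by
    rw [countBetween_eq_kcount r a a' haa]
    push_cast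
    ring
  rw [not_and_or, not_lt, not_lt] at hbad
  rcases hbad with hlo | hhi
  · right
    refine ⟨hbox, h4, ?_⟩
    rw [hcb] at hlo
    have hk : (kcount a a' r : ℝ) ≤ (|r a - r a'| + -L) * ((n:ℝ) - 2) := by nlinarith
    nlinarith
  · left
    refine ⟨hbox, h4, ?_⟩
    rw [hcb] at hhi
    have hk : (|r a - r a'| + L) * ((n:ℝ) - 2) ≤ (kcount a a' r : ℝ) := by nlinarith
    nlinarith

-- pair counting
lemma pair_card_bound (n : ℕ) :
    2 * (Finset.univ.filter fun p : Fin n × Fin n => p.1 < p.2).card ≤ n^2 := by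
  classical
  set P := Finset.univ.filter fun p : Fin n × Fin n => p.1 < p.2 with hP
  set Q := Finset.univ.filter fun p : Fin n × Fin n => p.2 < p.1 with hQ
  have hcardeq : P.card = Q.card := by
    apply Finset.card_bij (fun p _ => Prod.swap p)
    · intro p hp
      rw [hQ, Finset.mem_filter]
      exact ⟨Finset.mem_univ _, by simpa [Prod.swap] using (Finset.mem_filter.1 hp).2⟩
    · intro p hp q hq hpq
      exact Prod.swap_injective hpq
    · intro q hq
      exact ⟨Prod.swap q, Finset.mem_filter.2 ⟨Finset.mem_univ _,
        by simpa [Prod.swap] using (Finset.mem_filter.1 hq).2⟩, by simp⟩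
  have hdisj : Disjoint P Q := by
    rw [Finset.disjoint_left]
    intro p hp hq
    exact absurd ((Finset.mem_filter.1 hq).2) (asymm (Finset.mem_filter.1 hp).2)
  have hle : (P ∪ Q).card ≤ n * n := by
    calc (P ∪ Q).card ≤ (Finset.univ : Finset (Fin n × Fin n)).card :=
          Finset.card_le_card (Finset.subset_univ _)
      _ = n * n := by simp [Finset.card_univ]
  rw [Finset.card_union_of_disjoint hdisj] at hle
  rw [pow_two]
  omega


/-- `Pr[B4] ≤ 2n²·exp(−L(n−2)/12)`. -/
theorem stmt11 (n : ℕ) (L : ℝ) (hL : 0 < L) :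
    ratingsMeasure n {ω | EventB4 n L ω.1 ω.2} ≤
      ENNReal.ofReal (2 * (n:ℝ)^2 * Real.exp (-L * ((n:ℝ) - 2) / 12)) := by
  classical
  set C := ENNReal.ofReal (Real.exp (-(L/12) * ((n:ℝ)-2))) with hC
  have hRHS : ENNReal.ofReal (2 * (n:ℝ)^2 * Real.exp (-L * ((n:ℝ) - 2) / 12))
      = ENNReal.ofReal (2*(n:ℝ)^2) * C := by
    have harg : Real.exp (-L * ((n:ℝ) - 2) / 12) = Real.exp (-(L/12) * ((n:ℝ)-2)) := by
      congr 1
      ring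
    rw [harg, hC, ← ENNReal.ofReal_mul (by positivity)]
  set E := {ω : (Fin n → ℝ) × (Fin n → ℝ) | EventB4 n L ω.1 ω.2} with hE
  rcases lt_or_ge n 2 with hn2 | hn2
  · have hempty : E = ∅ := by
      ext ω
      simp only [hE, Set.mem_setOf_eq, Set.mem_empty_iff_false, iff_false]
      rintro ⟨a, a', b, b', haa, -⟩
      have h1 := a.isLt
      have h2 := a'.isLt
      exact haa (Fin.ext (by omega))
    rw [hempty]
    simp
  -- numeric facts
  have hc_up : Real.exp (1/5) - 1 ≤ 8/35 := by have := exp_fifth; linarith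
  have hc_lo : Real.exp (-(1/4)) - 1 ≤ -(4/19) := by have := exp_neg_quarter; linarith
  have hfinal_up : ∀ ℓ : ℝ, 0 ≤ ℓ → ℓ ≤ 4*L → (8/35:ℝ) * ℓ - (1/5) * (ℓ + L) ≤ -(L/12) := by
    intro ℓ h0 h4; linarith
  have hfinal_lo : ∀ ℓ : ℝ, 0 ≤ ℓ → ℓ ≤ 4*L →
      (-(4/19):ℝ) * ℓ - (-(1/4)) * (ℓ + -L) ≤ -(L/12) := by
    intro ℓ h0 h4; linarith
  set P := Finset.univ.filter (fun p : Fin n × Fin n => p.1 < p.2) with hP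
  set DM : Fin n × Fin n → Set (Fin n → ℝ) :=
    fun p => Aset n L (1/5) L p.1 p.2 ∪ Aset n L (-(1/4)) (-L) p.1 p.2 with hDM
  have hDMbound : ∀ p : Fin n × Fin n, p ∈ P → piU n (DM p) ≤ 2 * C := by
    intro p hp
    have hne : p.1 ≠ p.2 := ne_of_lt (Finset.mem_filter.1 hp).2
    have h1 := core hL (1/5) (8/35) L hc_up hfinal_up p.1 p.2 hne
    have h2 := core hL (-(1/4)) (-(4/19)) (-L) hc_lo hfinal_lo p.1 p.2 hne
    calc piU n (DM p) ≤ piU n (Aset n L (1/5) L p.1 p.2) + piU n (Aset n L (-(1/4)) (-L) p.1 p.2) :=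
          measure_union_le _ _
      _ ≤ C + C := add_le_add h1 h2
      _ = 2 * C := (two_mul C).symm
  set Good : Set ((Fin n → ℝ) × (Fin n → ℝ)) :=
    (Prod.fst ⁻¹' (unitBox n ∩ {r | Function.Injective r})) ∩ (Prod.snd ⁻¹' unitBox n) with hGood
  have hfst_eq : ∀ S : Set (Fin n → ℝ), ratingsMeasure n (Prod.fst ⁻¹' S) = piU n S := by
    intro S
    show ((Measure.pi fun _ => unif).prod (Measure.pi fun _ => unif)) (Prod.fst ⁻¹' S) = piU n S
    rw [← Set.prod_univ, Measure.prod_prod, measure_univ, mul_one]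
    rfl
  have hsnd_eq : ∀ S : Set (Fin n → ℝ), ratingsMeasure n (Prod.snd ⁻¹' S) = piU n S := by
    intro S
    show ((Measure.pi fun _ => unif).prod (Measure.pi fun _ => unif)) (Prod.snd ⁻¹' S) = piU n S
    rw [← Set.univ_prod, Measure.prod_prod, measure_univ, one_mul]
    rfl
  have hGoodc : ratingsMeasure n Goodᶜ = 0 := by
    have hsub : Goodᶜ ⊆ (Prod.fst ⁻¹' (unitBox n)ᶜ) ∪ (Prod.fst ⁻¹' {r | Function.Injective r}ᶜ)
        ∪ (Prod.snd ⁻¹' (unitBox n)ᶜ) := by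
      intro ω hω
      rw [hGood] at hω
      simp only [Set.mem_compl_iff, Set.mem_inter_iff, Set.mem_preimage, not_and_or] at hω
      simp only [Set.mem_union, Set.mem_preimage, Set.mem_compl_iff]
      tauto
    refine measure_mono_null hsub (measure_union_null (measure_union_null ?_ ?_) ?_)
    · rw [hfst_eq]; exact unitBox_compl_null n
    · rw [hfst_eq]
      have : {r : Fin n → ℝ | Function.Injective r}ᶜ = {r | ¬ Function.Injective r} := rfl
      rw [this]; exact noninj_null n
    · rw [hsnd_eq]; exact unitBox_compl_null n
  have hsub2 : E ∩ Good ⊆ (⋃ p ∈ P, Prod.fst ⁻¹' DM p) ∪ (⋃ p ∈ P, Prod.snd ⁻¹' DM p) := by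
    rintro ⟨rM, rW⟩ ⟨hEmem, hGmem⟩
    have hMbox : rM ∈ unitBox n := hGmem.1.1
    have hMinj : Function.Injective rM := hGmem.1.2
    have hWbox : rW ∈ unitBox n := hGmem.2
    obtain ⟨a, a', b, b', haa, hr1, hr2, hcase⟩ := hEmem
    rcases hcase with ⟨h4, hbad⟩ | ⟨h4, hbad⟩
    · left
      rcases lt_or_gt_of_ne haa with hlt | hlt
      · exact Set.mem_biUnion
          (show ((a, a') : Fin n × Fin n) ∈ P from Finset.mem_filter.2 ⟨Finset.mem_univ _, hlt⟩)
          (show (rM, rW) ∈ Prod.fst ⁻¹' DM (a, a') from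
            event_pair_sub rM a a' haa hMbox h4 hbad)
      · have h4' : |rM a' - rM a| ≤ 4*L := by rwa [abs_sub_comm]
        have hbad' := hbad
        rw [show |rM a - rM a'| = |rM a' - rM a| from abs_sub_comm _ _,
          show countBetween rM (rM a) (rM a') = countBetween rM (rM a') (rM a) from
            countBetween_comm _ _ _] at hbad'
        exact Set.mem_biUnion
          (show ((a', a) : Fin n × Fin n) ∈ P from Finset.mem_filter.2 ⟨Finset.mem_univ _, hlt⟩)
          (show (rM, rW) ∈ Prod.fst ⁻¹' DM (a', a) from
            event_pair_sub rM a' a haa.symm hMbox h4' hbad')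
    · right
      have hbb : b ≠ b' := by
        intro hbb
        apply haa
        apply hMinj
        apply eq_of_rankOf_eq rM
        rw [hr1, hr2, hbb]
      rcases lt_or_gt_of_ne hbb with hlt | hlt
      · exact Set.mem_biUnion
          (show ((b, b') : Fin n × Fin n) ∈ P from Finset.mem_filter.2 ⟨Finset.mem_univ _, hlt⟩)
          (show (rM, rW) ∈ Prod.snd ⁻¹' DM (b, b') from
            event_pair_sub rW b b' hbb hWbox h4 hbad)
      · have h4' : |rW b' - rW b| ≤ 4*L := by rwa [abs_sub_comm]
        have hbad' := hbad
        rw [show |rW b - rW b'| = |rW b' - rW b| from abs_sub_comm _ _,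
          show countBetween rW (rW b) (rW b') = countBetween rW (rW b') (rW b) from
            countBetween_comm _ _ _] at hbad'
        exact Set.mem_biUnion
          (show ((b', b) : Fin n × Fin n) ∈ P from Finset.mem_filter.2 ⟨Finset.mem_univ _, hlt⟩)
          (show (rM, rW) ∈ Prod.snd ⁻¹' DM (b', b) from
            event_pair_sub rW b' b hbb.symm hWbox h4' hbad')
  have hsplit : ratingsMeasure n E ≤ ratingsMeasure n (E ∩ Good) + ratingsMeasure n Goodᶜ := by
    have hsub : E ⊆ (E ∩ Good) ∪ Goodᶜ := by
      intro ω hω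
      by_cases hg : ω ∈ Good
      · exact Or.inl ⟨hω, hg⟩
      · exact Or.inr hg
    exact (measure_mono hsub).trans (measure_union_le _ _)
  calc ratingsMeasure n E ≤ ratingsMeasure n (E ∩ Good) + ratingsMeasure n Goodᶜ := hsplit
    _ = ratingsMeasure n (E ∩ Good) := by rw [hGoodc, add_zero]
    _ ≤ ratingsMeasure n ((⋃ p ∈ P, Prod.fst ⁻¹' DM p) ∪ (⋃ p ∈ P, Prod.snd ⁻¹' DM p)) :=
        measure_mono hsub2
    _ ≤ ratingsMeasure n (⋃ p ∈ P, Prod.fst ⁻¹' DM p)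
        + ratingsMeasure n (⋃ p ∈ P, Prod.snd ⁻¹' DM p) := measure_union_le _ _
    _ ≤ (∑ p ∈ P, ratingsMeasure n (Prod.fst ⁻¹' DM p))
        + ∑ p ∈ P, ratingsMeasure n (Prod.snd ⁻¹' DM p) :=
        add_le_add (measure_biUnion_finset_le _ _) (measure_biUnion_finset_le _ _)
    _ ≤ (∑ _p ∈ P, 2 * C) + ∑ _p ∈ P, 2 * C := by
        refine add_le_add (Finset.sum_le_sum fun p hp => ?_) (Finset.sum_le_sum fun p hp => ?_)
        · rw [hfst_eq]; exact hDMbound p hp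
        · rw [hsnd_eq]; exact hDMbound p hp
    _ = ((4 * P.card : ℕ) : ℝ≥0∞) * C := by
        rw [Finset.sum_const, nsmul_eq_mul]
        push_cast
        ring
    _ ≤ ENNReal.ofReal (2*(n:ℝ)^2) * C := by
        apply mul_le_mul_left
        have h1 : 4 * P.card ≤ 2 * n^2 := by
          have := pair_card_bound n
          rw [hP]
          omega
        calc ((4 * P.card : ℕ) : ℝ≥0∞) ≤ ((2 * n^2 : ℕ) : ℝ≥0∞) := by exact_mod_cast h1
          _ = ENNReal.ofReal (2*(n:ℝ)^2) := by
              rw [← ENNReal.ofReal_natCast]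
              congr 1
              push_cast
              ring
    _ = ENNReal.ofReal (2 * (n:ℝ)^2 * Real.exp (-L * ((n:ℝ) - 2) / 12)) := hRHS.symm

end
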